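/- (Odometer characterization) Let u_* : V → ℕ with finite support A_*, and let σ_* = σ_0 + Δ_ρ u_*. Suppose (i) σ_*(x) ≤ 1 for all x, (ii) σ_*(x) = 1 for all x ∈ A_*, and (iii) Top_ρ(u_*) is acyclic on A_*. Then there exists a finite complete legal firing sequence for σ_0 and its odometer function equals u_*. -/

import Mathlib

open scoped BigOperators

open Classical in
/-- Number of occurrences of the edge `e` among the rotors `ρ_1(s e), …, ρ_n(s e)`. -/
noncomputable def Rcount {V E : Type*} (src : E → V) (ρ : V → ℕ → E) (e : E) (n : ℕ) : ℕ :=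
  ((Finset.Icc 1 n).filter fun k => ρ (src e) k = e).card

open Classical in
/-- The stack Laplacian `Δ_ρ u (x) = Σ_{t(e)=x} R_ρ(e, u(s e)) − u x`. -/
noncomputable def stackLap {V E : Type*} (src tgt : E → V) (ρ : V → ℕ → E)
    (u : V → ℕ) (x : V) : ℤ :=
  (∑ᶠ e : E, if tgt e = x then (Rcount src ρ e (u (src e)) : ℤ) else 0) - u x

/-- The number of times each vertex occurs in a firing sequence. -/
def fireCnt {V : Type*} [DecidableEq V] (seq : List V) : V → ℕ :=
  fun x => seq.count x

/-- `seq` is a legal firing sequence for `σ0`: each fired vertex has more than one chip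
at the moment it is fired. -/
def IsLegalSeq {V E : Type*} [DecidableEq V] (src tgt : E → V) (ρ : V → ℕ → E)
    (σ0 : V → ℤ) (seq : List V) : Prop :=
  ∀ j : Fin seq.length,
    1 < σ0 (seq.get j) + stackLap src tgt ρ (fireCnt (seq.take j)) (seq.get j)

/-- `seq` is a complete firing sequence for `σ0`: afterwards no vertex has more than
one chip. -/
def IsCompleteSeq {V E : Type*} [DecidableEq V] (src tgt : E → V) (ρ : V → ℕ → E)
    (σ0 : V → ℤ) (seq : List V) : Prop :=
  ∀ x : V, σ0 x + stackLap src tgt ρ (fireCnt seq) x ≤ 1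

/-- A rotor configuration `r` is acyclic on `A`: every nonempty finite subset of `A`
contains a vertex whose rotor points outside the subset. -/
def AcyclicOn {V E : Type*} (tgt : E → V) (r : V → E) (A : Set V) : Prop :=
  ∀ A' ⊆ A, A'.Finite → A'.Nonempty → ∃ x ∈ A', tgt (r x) ∉ A'

section Aux
open Classical
variable {V E : Type*} (src tgt : E → V) (ρ : V → ℕ → E)

lemma Rcount_mono (e : E) {m n : ℕ} (h : m ≤ n) : Rcount src ρ e m ≤ Rcount src ρ e n := by
  classical
  exact Finset.card_le_card (Finset.filter_subset_filter _
    (Finset.Icc_subset_Icc_right h))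

lemma Rcount_eq_Ioc (e : E) (n : ℕ) :
    Rcount src ρ e n = ((Finset.Ioc 0 n).filter fun k => ρ (src e) k = e).card := by
  classical
  unfold Rcount
  congr 1

lemma Rcount_split (e : E) {m n : ℕ} (h : m ≤ n) :
    Rcount src ρ e n = Rcount src ρ e m
      + ((Finset.Ioc m n).filter fun k => ρ (src e) k = e).card := by
  classical
  rw [Rcount_eq_Ioc, Rcount_eq_Ioc]
  rw [← Finset.Ioc_union_Ioc_eq_Ioc (Nat.zero_le m) h, Finset.filter_union,
    Finset.card_union_of_disjoint]
  refine Finset.disjoint_filter_filter ?_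
  rw [Finset.disjoint_left]
  intro k hk hk'
  simp only [Finset.mem_Ioc] at hk hk'
  omega

lemma stackLap_eq (hloc : ∀ x : V, {e : E | tgt e = x}.Finite) (u : V → ℕ) (x : V) :
    stackLap src tgt ρ u x
      = (∑ e ∈ (hloc x).toFinset, (Rcount src ρ e (u (src e)) : ℤ)) - u x := by
  classical
  unfold stackLap
  congr 1
  rw [finsum_eq_sum_of_support_subset _ (s := (hloc x).toFinset)]
  · exact Finset.sum_congr rfl fun e he => by
      rw [if_pos (by simpa using he)]
  · intro e he
    simp only [Function.mem_support, ne_eq] at he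
    by_contra hne
    exact he (if_neg (by simpa using hne))

lemma stackLap_mono (hloc : ∀ x : V, {e : E | tgt e = x}.Finite) {u v : V → ℕ} (h : ∀ y, u y ≤ v y) (x : V) (hx : u x = v x) :
    stackLap src tgt ρ u x ≤ stackLap src tgt ρ v x := by
  classical
  rw [stackLap_eq src tgt ρ hloc, stackLap_eq src tgt ρ hloc, hx]
  apply sub_le_sub_right
  apply Finset.sum_le_sum
  intro e _
  exact_mod_cast Rcount_mono src ρ e (h (src e))

end Aux

section Fire
open Classical
variable {V E : Type*} [DecidableEq V] (src tgt : E → V) (ρ : V → ℕ → E)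

lemma fireCnt_append (l : List V) (x y : V) :
    fireCnt (l ++ [x]) y = fireCnt l y + if x = y then 1 else 0 := by
  simp only [fireCnt, List.count_append]
  congr 1
  simp [List.count_singleton', eq_comm]

lemma leastAction_take (hloc : ∀ x : V, {e : E | tgt e = x}.Finite)
    (σ0 : V → ℤ) (ustar : V → ℕ)
    (hle : ∀ x, σ0 x + stackLap src tgt ρ ustar x ≤ 1)
    (seq : List V) (hleg : IsLegalSeq src tgt ρ σ0 seq) :
    ∀ n, ∀ x, fireCnt (seq.take n) x ≤ ustar x := by
  intro n
  induction n with
  | zero => intro x; simp [fireCnt]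
  | succ n ih =>
    by_cases hn : n < seq.length
    · have htake : seq.take (n+1) = seq.take n ++ [seq.get ⟨n, hn⟩] := by
        rw [List.take_succ, List.getElem?_eq_getElem hn]
        rfl
      intro x
      rw [htake, fireCnt_append]
      by_cases hx : seq.get ⟨n, hn⟩ = x
      · subst hx
        rw [if_pos rfl]
        by_contra hcon
        push_neg at hcon
        have hEq : fireCnt (seq.take n) (seq.get ⟨n, hn⟩) = ustar (seq.get ⟨n, hn⟩) :=
          le_antisymm (ih _) (by omega)
        have hlg := hleg ⟨n, hn⟩
        have hm := stackLap_mono src tgt ρ hloc (u := fireCnt (seq.take n)) (v := ustar)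
          ih (seq.get ⟨n, hn⟩) hEq
        have hb := hle (seq.get ⟨n, hn⟩)
        simp only [Fin.getElem_fin] at hlg
        omega
      · rw [if_neg hx]
        simpa using ih x
    · have : seq.take (n+1) = seq.take n := by
        rw [List.take_succ, List.getElem?_eq_none (by omega)]
        simp
      rw [this]
      exact ih

lemma leastAction (hloc : ∀ x : V, {e : E | tgt e = x}.Finite)
    (σ0 : V → ℤ) (ustar : V → ℕ)
    (hle : ∀ x, σ0 x + stackLap src tgt ρ ustar x ≤ 1)
    (seq : List V) (hleg : IsLegalSeq src tgt ρ σ0 seq) :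
    ∀ x, fireCnt seq x ≤ ustar x := by
  have := leastAction_take src tgt ρ hloc σ0 ustar hle seq hleg seq.length
  simpa using this

end Fire

section Uniq
open Classical
variable {V E : Type*} [DecidableEq V] (src tgt : E → V) (ρ : V → ℕ → E)

lemma complete_eq (hsrc : ∀ x k, src (ρ x k) = x)
    (hloc : ∀ x : V, {e : E | tgt e = x}.Finite)
    (σ0 : V → ℤ) (ustar : V → ℕ) (hustar : (Function.support ustar).Finite)
    (heq : ∀ x, ustar x ≠ 0 → σ0 x + stackLap src tgt ρ ustar x = 1)
    (hacyc : AcyclicOn tgt (fun x => ρ x (ustar x)) (Function.support ustar))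
    (u : V → ℕ) (hcle : ∀ x, u x ≤ ustar x)
    (hcomp : ∀ x, σ0 x + stackLap src tgt ρ u x ≤ 1) :
    ∀ x, u x = ustar x := by
  classical
  by_contra hcon
  push_neg at hcon
  obtain ⟨z, hz⟩ := hcon
  set A' : Finset V := hustar.toFinset.filter (fun x => u x < ustar x) with hA'
  have hmemA' : ∀ x, x ∈ A' ↔ u x < ustar x := by
    intro x
    simp only [hA', Finset.mem_filter, Set.Finite.mem_toFinset, Function.mem_support]
    exact ⟨fun h => h.2, fun h => ⟨by omega, h⟩⟩
  have hzA' : z ∈ A' := (hmemA' z).2 (lt_of_le_of_ne (hcle z) hz)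
  -- the deficit function on edges
  set d : E → ℕ := fun e => Rcount src ρ e (ustar (src e)) - Rcount src ρ e (u (src e))
    with hd
  have hdcast : ∀ e, (d e : ℤ)
      = (Rcount src ρ e (ustar (src e)) : ℤ) - Rcount src ρ e (u (src e)) := by
    intro e
    simp only [hd]
    rw [Nat.cast_sub (Rcount_mono src ρ e (hcle (src e)))]
  set T : V → Finset E := fun x => (hloc x).toFinset with hT
  have hmemT : ∀ x e, e ∈ T x ↔ tgt e = x := by
    intro x e; simp [hT]
  -- per-vertex inequality
  have hpv : ∀ x ∈ A', ustar x - u x ≤ ∑ e ∈ T x, d e := by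
    intro x hx
    have hx' := (hmemA' x).1 hx
    have h1 := heq x (by omega)
    have h2 := hcomp x
    rw [stackLap_eq src tgt ρ hloc] at h1 h2
    have hTx : (hloc x).toFinset = T x := rfl
    rw [hTx] at h1 h2
    have hZ : (ustar x : ℤ) - u x ≤ ∑ e ∈ T x, (d e : ℤ) := by
      have : ∑ e ∈ T x, (d e : ℤ)
          = (∑ e ∈ T x, (Rcount src ρ e (ustar (src e)) : ℤ))
            - ∑ e ∈ T x, (Rcount src ρ e (u (src e)) : ℤ) := by
        rw [← Finset.sum_sub_distrib]
        exact Finset.sum_congr rfl fun e _ => hdcast e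
      rw [this]
      omega
    have := hZ
    rw [← Nat.cast_sum] at this
    omega
  -- the edge set into A'
  set W : Finset E := A'.biUnion T with hW
  have htgtW : ∀ e ∈ W, tgt e ∈ A' := by
    intro e he
    rw [hW, Finset.mem_biUnion] at he
    obtain ⟨x, hx, he⟩ := he
    rwa [(hmemT x e).1 he]
  have hsum1 : ∑ x ∈ A', ∑ e ∈ T x, d e = ∑ e ∈ W, d e := by
    rw [hW, Finset.sum_biUnion]
    intro x hx y hy hxy
    simp only [Function.onFun]
    rw [Finset.disjoint_left]
    intro e hex hey
    exact hxy (((hmemT x e).1 hex) ▸ ((hmemT y e).1 hey))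
  set W' : Finset E := W.filter (fun e => src e ∈ A') with hW'
  have hsum2 : ∑ e ∈ W', d e = ∑ e ∈ W, d e := by
    apply Finset.sum_subset (Finset.filter_subset _ _)
    intro e heW heW'
    have hsrcA : src e ∉ A' := by
      intro h; exact heW' (Finset.mem_filter.2 ⟨heW, h⟩)
    have : u (src e) = ustar (src e) := by
      have := hcle (src e)
      have h2 := (hmemA' (src e)).not.1 hsrcA
      omega
    simp [hd, this]
  set F : V → Finset ℕ := fun y =>
    (Finset.Ioc (u y) (ustar y)).filter (fun k => tgt (ρ y k) ∈ A') with hF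
  have hsum3 : ∑ e ∈ W', d e ≤ ∑ y ∈ A', (F y).card := by
    rw [← Finset.sum_fiberwise_of_maps_to (g := src) (t := A')
      (fun e he => (Finset.mem_filter.1 he).2)]
    apply Finset.sum_le_sum
    intro y hy
    set Sy := W'.filter (fun e => src e = y) with hSy
    have hde : ∀ e ∈ Sy, d e
        = ((Finset.Ioc (u y) (ustar y)).filter (fun k => ρ y k = e)).card := by
      intro e he
      obtain ⟨heW', hesrc⟩ := Finset.mem_filter.1 he
      have := Rcount_split src ρ e (hcle (src e))
      simp only [hd]
      rw [hesrc] at this ⊢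
      omega
    rw [Finset.sum_congr rfl hde]
    rw [← Finset.card_biUnion]
    · apply Finset.card_le_card
      intro k hk
      rw [Finset.mem_biUnion] at hk
      obtain ⟨e, heSy, hk⟩ := hk
      obtain ⟨hkIoc, hρ⟩ := Finset.mem_filter.1 hk
      refine Finset.mem_filter.2 ⟨hkIoc, ?_⟩
      rw [hρ]
      exact htgtW e (Finset.filter_subset _ _ ((Finset.filter_subset _ _) heSy))
    · intro e he e' he' hee
      rw [Function.onFun, Finset.disjoint_left]
      intro k hk hk'
      exact hee (((Finset.mem_filter.1 hk).2) ▸ ((Finset.mem_filter.1 hk').2))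
  -- strict bound using acyclicity
  have hsub : (↑A' : Set V) ⊆ Function.support ustar := by
    intro x hx
    have := (hmemA' x).1 (Finset.mem_coe.1 hx)
    simp only [Function.mem_support]
    omega
  obtain ⟨x0, hx0A, hx0⟩ := hacyc (↑A') hsub A'.finite_toSet ⟨z, Finset.mem_coe.2 hzA'⟩
  rw [Finset.mem_coe] at hx0A
  have hsum4 : ∑ y ∈ A', (F y).card < ∑ y ∈ A', (ustar y - u y) := by
    apply Finset.sum_lt_sum
    · intro y hy
      calc (F y).card ≤ (Finset.Ioc (u y) (ustar y)).card := Finset.card_filter_le _ _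
        _ = ustar y - u y := Nat.card_Ioc _ _
    · refine ⟨x0, hx0A, ?_⟩
      have hlt : (F x0).card < (Finset.Ioc (u x0) (ustar x0)).card := by
        apply Finset.card_lt_card
        rw [hF]
        refine Finset.filter_ssubset.2 ⟨ustar x0, ?_, ?_⟩
        · exact Finset.mem_Ioc.2 ⟨(hmemA' x0).1 hx0A, le_refl _⟩
        · intro hmem
          exact hx0 (Finset.mem_coe.2 hmem)
      rwa [Nat.card_Ioc] at hlt
  have htot : ∑ y ∈ A', (ustar y - u y) ≤ ∑ x ∈ A', ∑ e ∈ T x, d e :=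
    Finset.sum_le_sum hpv
  omega

end Uniq

section Exist
open Classical
variable {V E : Type*} [DecidableEq V] (src tgt : E → V) (ρ : V → ℕ → E)

lemma legal_nil (σ0 : V → ℤ) : IsLegalSeq src tgt ρ σ0 ([] : List V) := by
  intro j
  exact absurd j.isLt (by simp)

lemma legal_append (σ0 : V → ℤ) (seq : List V) (hleg : IsLegalSeq src tgt ρ σ0 seq)
    (x : V) (hx : 1 < σ0 x + stackLap src tgt ρ (fireCnt seq) x) :
    IsLegalSeq src tgt ρ σ0 (seq ++ [x]) := by
  intro j
  have hjlen : (j : ℕ) < seq.length + 1 := by simpa using j.isLt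
  by_cases hj : (j : ℕ) < seq.length
  · have hget : (seq ++ [x]).get j = seq.get ⟨j, hj⟩ := by
      simp [List.get_eq_getElem, List.getElem_append, hj]
    have htake : (seq ++ [x]).take j = seq.take j :=
      List.take_append_of_le_length (le_of_lt hj)
    rw [hget, htake]
    exact hleg ⟨j, hj⟩
  · have hj' : (j : ℕ) = seq.length := by omega
    have hget : (seq ++ [x]).get j = x := by
      simp [List.get_eq_getElem, List.getElem_append, hj']
    have htake : (seq ++ [x]).take j = seq := by
      rw [hj', List.take_left]
    rw [hget, htake]
    exact hx

lemma legal_length_le (hloc : ∀ x : V, {e : E | tgt e = x}.Finite)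
    (σ0 : V → ℤ) (ustar : V → ℕ) (hustar : (Function.support ustar).Finite)
    (hle : ∀ x, σ0 x + stackLap src tgt ρ ustar x ≤ 1)
    (seq : List V) (hleg : IsLegalSeq src tgt ρ σ0 seq) :
    seq.length ≤ ∑ x ∈ hustar.toFinset, ustar x := by
  have hcnt := leastAction src tgt ρ hloc σ0 ustar hle seq hleg
  calc seq.length = ∑ x ∈ seq.toFinset, seq.count x := by
        simpa using (Multiset.toFinset_sum_count_eq (↑seq : Multiset V)).symm
    _ ≤ ∑ x ∈ seq.toFinset, ustar x := Finset.sum_le_sum fun x _ => hcnt x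
    _ ≤ ∑ x ∈ hustar.toFinset, ustar x := by
        apply Finset.sum_le_sum_of_subset
        intro x hx
        rw [Set.Finite.mem_toFinset, Function.mem_support]
        have h1 : 0 < seq.count x := List.count_pos_iff.mpr (List.mem_toFinset.1 hx)
        have := hcnt x
        simp only [fireCnt] at this
        omega

lemma exists_complete (hloc : ∀ x : V, {e : E | tgt e = x}.Finite)
    (σ0 : V → ℤ) (ustar : V → ℕ) (hustar : (Function.support ustar).Finite)
    (hle : ∀ x, σ0 x + stackLap src tgt ρ ustar x ≤ 1) :
    ∃ seq : List V, IsLegalSeq src tgt ρ σ0 seq ∧ IsCompleteSeq src tgt ρ σ0 seq := by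
  classical
  set B := ∑ x ∈ hustar.toFinset, ustar x with hB
  suffices h : ∀ k (seq : List V), IsLegalSeq src tgt ρ σ0 seq → B ≤ seq.length + k →
      ∃ seq' : List V, IsLegalSeq src tgt ρ σ0 seq' ∧ IsCompleteSeq src tgt ρ σ0 seq' by
    exact h B [] (legal_nil src tgt ρ σ0) (by simp)
  intro k
  induction k with
  | zero =>
    intro seq hleg hlen
    by_cases hc : IsCompleteSeq src tgt ρ σ0 seq
    · exact ⟨seq, hleg, hc⟩
    · exfalso
      simp only [IsCompleteSeq, not_forall, not_le] at hc
      obtain ⟨x, hx⟩ := hc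
      have hleg' := legal_append src tgt ρ σ0 seq hleg x hx
      have hlen' := legal_length_le src tgt ρ hloc σ0 ustar hustar hle _ hleg'
      rw [List.length_append, List.length_singleton] at hlen'
      omega
  | succ k ih =>
    intro seq hleg hlen
    by_cases hc : IsCompleteSeq src tgt ρ σ0 seq
    · exact ⟨seq, hleg, hc⟩
    · simp only [IsCompleteSeq, not_forall, not_le] at hc
      obtain ⟨x, hx⟩ := hc
      refine ih (seq ++ [x]) (legal_append src tgt ρ σ0 seq hleg x hx) ?_
      rw [List.length_append, List.length_singleton]
      omega

end Exist


/-- Odometer characterization ("no hills, no holes, no cycles"): if `u_*` is finitely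
supported, `σ_* = σ_0 + Δ_ρ u_* ≤ 1` everywhere, `σ_* = 1` on the support of `u_*`,
and `Top_ρ(u_*)` is acyclic on the support, then there exists a finite complete legal
firing sequence for `σ_0` and the odometer of every such sequence equals `u_*`. -/
theorem odometer_characterization {V E : Type*} [DecidableEq V]
    (src tgt : E → V) (ρ : V → ℕ → E)
    (hsrc : ∀ x k, src (ρ x k) = x)
    (hloc : ∀ x : V, {e : E | tgt e = x}.Finite)
    (hconn : ∀ x y : V, Relation.ReflTransGen (fun a b => ∃ e, src e = a ∧ tgt e = b) x y)
    (σ0 : V → ℤ) (hσ0 : (Function.support σ0).Finite)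
    (ustar : V → ℕ) (hustar : (Function.support ustar).Finite)
    (hle : ∀ x, σ0 x + stackLap src tgt ρ ustar x ≤ 1)
    (heq : ∀ x, ustar x ≠ 0 → σ0 x + stackLap src tgt ρ ustar x = 1)
    (hacyc : AcyclicOn tgt (fun x => ρ x (ustar x)) (Function.support ustar)) :
    (∃ seq : List V, IsLegalSeq src tgt ρ σ0 seq ∧ IsCompleteSeq src tgt ρ σ0 seq) ∧
    ∀ seq : List V, IsLegalSeq src tgt ρ σ0 seq → IsCompleteSeq src tgt ρ σ0 seq →
      fireCnt seq = ustar := by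
  constructor
  · exact exists_complete src tgt ρ hloc σ0 ustar hustar hle
  · intro seq hleg hcomp
    funext x
    exact complete_eq src tgt ρ hsrc hloc σ0 ustar hustar heq hacyc
      (fireCnt seq) (leastAction src tgt ρ hloc σ0 ustar hle seq hleg) hcomp x
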